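/- Chebyshev expansion of the DAHA action (key identity of Lemma 3.1): let S_m ∈ ℤ[u] be the Chebyshev polynomials of the second kind, S_0 = 1, S_1 = u, S_{m+1} = u S_m − S_{m−1}. Then for every n ≥ 1, evaluating S_{n−1} at the endomorphism 𝒴 + 𝒴′ and applying the result to U − U^{−1} gives S_{n−1}(𝒴 + 𝒴′)(U − U^{−1}) = ∑_{p=1}^{n} a_{n,p} (U^p − U^{−p}) in F[U,U^{−1}]. -/

import Mathlib

/- STATEMENT 4: Chebyshev expansion of the DAHA action (key identity of Lemma 3.1):
with S_m the Chebyshev polynomials of the second kind (S_0 = 1, S_1 = u,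
S_{m+1} = u S_m − S_{m−1}), for every n ≥ 1,
S_{n−1}(𝒴 + 𝒴′)(U − U^{−1}) = ∑_{p=1}^{n} a_{n,p} (U^p − U^{−p}) in F[U,U⁻¹]. -/

set_option maxHeartbeats 1000000
noncomputable section

open LaurentPolynomial

/-- The field `F = ℚ(q, t₁, t₂)` of rational functions in three indeterminates. -/
abbrev F : Type := FractionRing (MvPolynomial (Fin 3) ℚ)

def q : F := algebraMap (MvPolynomial (Fin 3) ℚ) F (MvPolynomial.X 0)
def t1 : F := algebraMap (MvPolynomial (Fin 3) ℚ) F (MvPolynomial.X 1)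
def t2 : F := algebraMap (MvPolynomial (Fin 3) ℚ) F (MvPolynomial.X 2)

/-- `a_k = (t̄₁ − t̄₂ q^{2k−1})/(1 − q^{4k−2})`. -/
def aop (k : ℤ) : F :=
  ((t1 - t1⁻¹) - (t2 - t2⁻¹) * q ^ (2 * k - 1)) / (1 - q ^ (4 * k - 2))

/-- `A_p = (q^{2p−1}t₁^{−1} − q^{1−2p}t₁ + t₂ − t₂^{−1})/(q^{2p−1} − q^{1−2p})`. -/
def A (p : ℤ) : F :=
  (q ^ (2 * p - 1) * t1⁻¹ - q ^ (1 - 2 * p) * t1 + t2 - t2⁻¹) /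
    (q ^ (2 * p - 1) - q ^ (1 - 2 * p))

/-- The coefficients `a_{n,p}` defined by the DAHA recurrence. -/
def a : ℕ → ℤ → F
  | 0, _ => 0
  | 1, p => if p = 1 then 1 else if p = -1 then -1 else 0
  | n + 2, p =>
      A p * a (n + 1) (p - 1) + (A p - A (p + 1)) * a (n + 1) p
        + A (-p) * a (n + 1) (p + 1) - a n p

/-- Chebyshev polynomials of the second kind: `S_0 = 1`, `S_1 = u`,
`S_{m+1} = u S_m − S_{m−1}`. -/
def S : ℕ → Polynomial ℤ
  | 0 => 1
  | 1 => Polynomial.X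
  | m + 2 => Polynomial.X * S (m + 1) - S m

/- ### auxiliary: nonvanishing -/

lemma Finj : Function.Injective (algebraMap (MvPolynomial (Fin 3) ℚ) F) :=
  IsFractionRing.injective _ _

lemma X_ne (i : Fin 3) : (algebraMap (MvPolynomial (Fin 3) ℚ) F) (MvPolynomial.X i) ≠ 0 := by
  intro h
  have := Finj (h.trans (map_zero _).symm)
  exact MvPolynomial.X_ne_zero i this

lemma q_ne : q ≠ 0 := X_ne 0
lemma t1_ne : t1 ≠ 0 := X_ne 1
lemma t2_ne : t2 ≠ 0 := X_ne 2

lemma q_pow_ne_one (n : ℕ) (hn : n ≠ 0) : q ^ n ≠ 1 := by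
  intro h
  have h1 : (algebraMap (MvPolynomial (Fin 3) ℚ) F) ((MvPolynomial.X 0 : MvPolynomial (Fin 3) ℚ) ^ n)
      = algebraMap (MvPolynomial (Fin 3) ℚ) F 1 := by
    simpa [map_pow, q] using h
  have h2 := Finj h1
  have h4 := congrArg (MvPolynomial.eval (fun _ => (2:ℚ))) h2
  rw [map_pow, map_one, MvPolynomial.eval_X] at h4
  have h3 : (1:ℚ) < 2 ^ n := one_lt_pow₀ (by norm_num) hn
  rw [h4] at h3; exact lt_irrefl _ h3

lemma q_zpow_ne_one (m : ℤ) (hm : m ≠ 0) : q ^ m ≠ 1 := by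
  rcases lt_trichotomy m 0 with h | h | h
  · intro he
    have h1 : q ^ (-m) = 1 := by rw [zpow_neg, he, inv_one]
    obtain ⟨k, hk⟩ : ∃ k : ℕ, (-m) = (k:ℤ) := ⟨(-m).toNat, by omega⟩
    rw [hk, zpow_natCast] at h1
    exact q_pow_ne_one k (by omega) h1
  · exact absurd h hm
  · intro he
    obtain ⟨k, hk⟩ : ∃ k : ℕ, m = (k:ℤ) := ⟨m.toNat, by omega⟩
    rw [hk, zpow_natCast] at he
    exact q_pow_ne_one k (by omega) he

lemma zpow_sq (m : ℤ) : (q ^ m) ^ 2 = q ^ (m * 2) := by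
  rw [zpow_mul, zpow_two, sq]

lemma zpow_sq_ne_one (m : ℤ) (hm : m ≠ 0) : (q ^ m) ^ 2 ≠ 1 := by
  rw [zpow_sq]; exact q_zpow_ne_one _ (by omega)

lemma qzpow_ne (m : ℤ) : q ^ m ≠ 0 := zpow_ne_zero m q_ne

/- ### generic field identities -/

section generic
variable {K : Type*} [Field K]
variable (t u z : K) (ht : t ≠ 0) (hu : u ≠ 0) (hz : z ≠ 0) (hz2 : z^2 ≠ 1)
include ht hu hz hz2

lemma gen1 :
    (z * t⁻¹ - z⁻¹ * t + u - u⁻¹) / (z - z⁻¹)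
      = t - ((t - t⁻¹) - (u - u⁻¹) * z⁻¹) / (1 - (z^2)⁻¹) := by
  have h3 : z^2 - 1 ≠ 0 := sub_ne_zero.mpr hz2
  have h1 : z - z⁻¹ ≠ 0 := by
    intro h; apply h3; have := sub_eq_zero.mp h; field_simp at this; linear_combination this
  have h2 : 1 - (z^2)⁻¹ ≠ 0 := by
    intro h; apply hz2
    have h' : (z^2)⁻¹ = 1 := by linear_combination -h
    exact inv_eq_one.mp h'
  rw [eq_sub_iff_add_eq, div_add_div _ _ h1 h2, div_eq_iff (mul_ne_zero h1 h2)]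
  field_simp
  try rw [div_eq_iff (by apply_rules [mul_ne_zero, pow_ne_zero])]
  ring

lemma gen2 :
    (z⁻¹ * t⁻¹ - z * t + u - u⁻¹) / (z⁻¹ - z)
      = t - ((t - t⁻¹) - (u - u⁻¹) * z) / (1 - z^2) := by
  have h3 : z^2 - 1 ≠ 0 := sub_ne_zero.mpr hz2
  have h4 : (1:K) - z^2 ≠ 0 := fun h => h3 (by linear_combination -h)
  have h1 : z⁻¹ - z ≠ 0 := by
    intro h; apply h3; have := sub_eq_zero.mp h; field_simp at this; linear_combination -this
  rw [eq_sub_iff_add_eq, div_add_div _ _ h1 h4, div_eq_iff (mul_ne_zero h1 h4)]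
  field_simp
  try rw [div_eq_iff (by apply_rules [mul_ne_zero, pow_ne_zero])]
  ring

lemma gen3 :
    (z * t⁻¹ - z⁻¹ * t + u - u⁻¹) / (z - z⁻¹)
      + (z⁻¹ * t⁻¹ - z * t + u - u⁻¹) / (z⁻¹ - z) = t + t⁻¹ := by
  have h3 : z^2 - 1 ≠ 0 := sub_ne_zero.mpr hz2
  have h1 : z - z⁻¹ ≠ 0 := by
    intro h; apply h3; have := sub_eq_zero.mp h; field_simp at this; linear_combination this
  have h1' : z⁻¹ - z ≠ 0 := fun h => h1 (by linear_combination -h)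
  rw [div_add_div _ _ h1 h1', div_eq_iff (mul_ne_zero h1 h1')]
  field_simp
  try rw [div_eq_iff (by apply_rules [mul_ne_zero, pow_ne_zero])]
  ring

end generic

/- ### identities for `A` and `aop` -/

lemma hA1 (p : ℤ) : A (p + 1) = t1 - aop (-p) := by
  rw [A, aop,
    show (2*(p+1)-1 : ℤ) = 2*p+1 by ring,
    show (1-2*(p+1) : ℤ) = -(2*p+1) by ring,
    show (2*(-p)-1 : ℤ) = -(2*p+1) by ring,
    show (4*(-p)-2 : ℤ) = -((2*p+1)*2) by ring,
    zpow_neg, zpow_neg, ← zpow_sq]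
  exact gen1 t1 t2 (q ^ (2*p+1)) t1_ne t2_ne (qzpow_ne _) (zpow_sq_ne_one _ (by omega))

lemma hA2 (p : ℤ) : A (1 - p) = t1 - aop p := by
  rw [A, aop,
    show (2*(1-p)-1 : ℤ) = -(2*p-1) by ring,
    show (1-2*(1-p) : ℤ) = 2*p-1 by ring,
    show (4*p-2 : ℤ) = (2*p-1)*2 by ring,
    zpow_neg, ← zpow_sq]
  exact gen2 t1 t2 (q ^ (2*p-1)) t1_ne t2_ne (qzpow_ne _) (zpow_sq_ne_one _ (by omega))

lemma hA3 (p : ℤ) : A p + A (1 - p) = t1 + t1⁻¹ := by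
  rw [A, A,
    show (2*(1-p)-1 : ℤ) = -(2*p-1) by ring,
    show (1-2*(1-p) : ℤ) = 2*p-1 by ring,
    show (1-2*p : ℤ) = -(2*p-1) by ring,
    zpow_neg]
  exact gen3 t1 t2 (q ^ (2*p-1)) t1_ne t2_ne (qzpow_ne _) (zpow_sq_ne_one _ (by omega))

lemma hc3 (p : ℤ) : aop p + aop (-p) - (t1 - t1⁻¹) = A p - A (p + 1) := by
  have h3 := hA3 (-p)
  rw [show (1 - -p : ℤ) = p + 1 by ring] at h3
  linear_combination (hA1 p) + (hA2 p) - (hA3 p) - h3 + h3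

lemma hAsym (p : ℤ) : A (-p) - A (-p + 1) = A p - A (p + 1) := by
  have h3 := hA3 (-p)
  rw [show (1 - -p : ℤ) = p + 1 by ring] at h3
  have h4 := hA3 p
  rw [show (-p + 1 : ℤ) = 1 - p by ring]
  linear_combination h3 - h4



/- ### coefficient lemmas -/

lemma a_antisym : ∀ n : ℕ, ∀ p : ℤ, a n (-p) = - a n p := by
  intro n
  induction n using Nat.twoStepInduction with
  | zero => intro p; simp [a]
  | one =>
    intro p
    simp only [a]
    split_ifs <;> first | (exfalso; omega) | ring
  | more n ih0 ih1 =>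
    intro p
    show a (n + 2) (-p) = - a (n + 2) p
    simp only [a, neg_neg]
    rw [hAsym p,
      show (-p - 1 : ℤ) = -(p+1) by ring,
      show (-p + 1 : ℤ) = -(p-1) by ring,
      ih1 (p+1), ih1 (p-1), ih1 p, ih0 p]
    ring

lemma a_zero (n : ℕ) : a n 0 = 0 := by
  have h := a_antisym n 0
  rw [neg_zero] at h
  linear_combination h / 2

lemma a_gt : ∀ n : ℕ, ∀ p : ℤ, (n : ℤ) < p → a n p = 0 := by
  intro n
  induction n using Nat.twoStepInduction with
  | zero => intro p _; rfl
  | one =>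
    intro p hp
    simp only [Nat.cast_one] at hp
    simp only [a]
    split_ifs <;> first | (exfalso; omega) | rfl
  | more n ih0 ih1 =>
    intro p hp
    push_cast at hp
    show a (n + 2) p = 0
    simp only [a]
    rw [ih1 (p-1) (by push_cast; omega), ih1 p (by push_cast; omega),
      ih1 (p+1) (by push_cast; omega), ih0 p (by push_cast; omega)]
    ring

/- ### the module part -/

/-- `v p = U^p - U^{-p}`. -/
def v (p : ℤ) : LaurentPolynomial F := T p - T (-p)

lemma v_zero : v 0 = 0 := by simp [v]

section main

variable (Y Y' : Module.End F (LaurentPolynomial F))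
variable (hY : ∀ k : ℤ, Y (T k) = t1 • T (k - 1) - aop k • (T (k - 1) + T (-k)))
variable (hY' : ∀ k : ℤ, Y' (T k) =
      t1 • T (k + 1) - aop (-k) • (T (k + 1) + T (-k)) + (t1 - t1⁻¹) • T (-k))

include hY hY' in
lemma Dv (p : ℤ) : (Y + Y') (v p) =
    A (p + 1) • v (p + 1) + (A p - A (p + 1)) • v p + A (1 - p) • v (p - 1) := by
  have h1 := hY p
  have h2 := hY (-p)
  have h3 := hY' p
  have h4 := hY' (-p)
  rw [neg_neg] at h2 h4
  rw [show (-p - 1 : ℤ) = -(p+1) by ring] at h2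
  rw [show (-p + 1 : ℤ) = -(p-1) by ring] at h4
  rw [← hc3 p, hA1 p, hA2 p]
  simp only [v, LinearMap.add_apply, map_sub, h1, h2, h3, h4]
  simp only [Algebra.smul_def, map_add, map_sub, map_mul, map_one]
  ring

include hY hY' in
lemma key : ∀ m : ℕ, (Polynomial.aeval (Y + Y') (S m)) (T 1 - T (-1)) =
    ∑ p ∈ Finset.Icc (1 : ℤ) ((m : ℤ) + 1), a (m + 1) p • v p := by
  intro m
  induction m using Nat.twoStepInduction with
  | zero =>
    simp only [S, map_one, Module.End.one_apply, Nat.cast_zero, zero_add,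
      Finset.Icc_self, Finset.sum_singleton]
    have : a 1 1 = 1 := by simp [a]
    rw [this, one_smul, v]
  | one =>
    simp only [S, Polynomial.aeval_X, Nat.cast_one]
    have hv : T (1:ℤ) - T (-1 : ℤ) = v 1 := rfl
    rw [hv, Dv Y Y' hY hY' 1]
    have h2 : Finset.Icc (1:ℤ) (1+1) = {1, 2} := rfl
    rw [h2, Finset.sum_insert (by decide), Finset.sum_singleton]
    have ha1 : a 2 1 = A 1 - A 2 := by
      show a (0+2) 1 = _
      simp only [a]
      norm_num
    have ha2 : a 2 2 = A 2 := by
      show a (0+2) 2 = _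
      simp only [a]
      norm_num
    rw [ha1, ha2]
    rw [show (1 - 1 : ℤ) = 0 by ring, v_zero, smul_zero, add_zero,
      show (1 + 1 : ℤ) = 2 by ring]
    abel
  | more n ih0 ih1 =>
    have hS : S (n + 2) = Polynomial.X * S (n + 1) - S n := rfl
    have hS2 : Polynomial.aeval (Y + Y') (S (n + 2))
        = (Y + Y') * Polynomial.aeval (Y + Y') (S (n + 1)) - Polynomial.aeval (Y + Y') (S n) := by
      rw [hS, map_sub, map_mul, Polynomial.aeval_X]
    rw [hS2, LinearMap.sub_apply, Module.End.mul_apply, ih0, ih1]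
    push_cast
    set K : ℤ := (n : ℤ) + 3 with hK
    -- extend both sums to `Icc 1 K`
    have ext1 : ∑ p ∈ Finset.Icc (1:ℤ) ((n:ℤ)+1+1), a (n+1+1) p • v p
        = ∑ p ∈ Finset.Icc (1:ℤ) K, a (n+2) p • v p := by
      apply Finset.sum_subset (Finset.Icc_subset_Icc_right (by omega))
      intro x hx hnx
      simp only [Finset.mem_Icc] at hx hnx
      rw [show (n+1+1 : ℕ) = n+2 from rfl, a_gt (n+2) x (by push_cast; omega), zero_smul]
    have ext0 : ∑ p ∈ Finset.Icc (1:ℤ) ((n:ℤ)+1), a (n+1) p • v p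
        = ∑ p ∈ Finset.Icc (1:ℤ) K, a (n+1) p • v p := by
      apply Finset.sum_subset (Finset.Icc_subset_Icc_right (by omega))
      intro x hx hnx
      simp only [Finset.mem_Icc] at hx hnx
      rw [a_gt (n+1) x (by push_cast; omega), zero_smul]
    rw [show ((n:ℤ)+1+1) = (n:ℤ)+1+1 from rfl] at ext1
    rw [ext1, ext0, map_sum]
    have hDv : ∀ p ∈ Finset.Icc (1:ℤ) K, (Y + Y') (a (n+2) p • v p)
        = (a (n+2) p * A (p+1)) • v (p+1) + ((A p - A (p+1)) * a (n+2) p) • v p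
          + (a (n+2) p * A (1-p)) • v (p-1) := by
      intro p _
      rw [map_smul, Dv Y Y' hY hY' p, smul_add, smul_add, smul_smul, smul_smul, smul_smul]
      ring_nf
    rw [Finset.sum_congr rfl hDv, Finset.sum_add_distrib, Finset.sum_add_distrib]
    -- shift the first sum
    have shift1 : ∑ p ∈ Finset.Icc (1:ℤ) K, (a (n+2) p * A (p+1)) • v (p+1)
        = ∑ r ∈ Finset.Icc (1:ℤ) K, (A r * a (n+2) (r-1)) • v r := by
      have s1 : ∑ p ∈ Finset.Icc (1:ℤ) (K-1), (a (n+2) p * A (p+1)) • v (p+1)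
          = ∑ p ∈ Finset.Icc (1:ℤ) K, (a (n+2) p * A (p+1)) • v (p+1) := by
        apply Finset.sum_subset (Finset.Icc_subset_Icc_right (by omega))
        intro x hx hnx
        simp only [Finset.mem_Icc] at hx hnx
        rw [a_gt (n+2) x (by push_cast; omega), zero_mul, zero_smul]
      have s2 : ∑ r ∈ Finset.Icc (2:ℤ) K, (A r * a (n+2) (r-1)) • v r
          = ∑ r ∈ Finset.Icc (1:ℤ) K, (A r * a (n+2) (r-1)) • v r := by
        apply Finset.sum_subset (by apply Finset.Icc_subset_Icc_left; omega)
        intro x hx hnx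
        simp only [Finset.mem_Icc] at hx hnx
        have hx1 : x = 1 := by omega
        rw [hx1, show (1-1:ℤ) = 0 by ring, a_zero, mul_zero, zero_smul]
      rw [← s1, ← s2]
      have h := Finset.map_add_left_Icc (1:ℤ) (K-1) 1
      rw [show (1+1:ℤ) = 2 by ring, show (1+(K-1):ℤ) = K by ring] at h
      rw [← h, Finset.sum_map]
      apply Finset.sum_congr rfl
      intro p _
      show (a (n+2) p * A (p+1)) • v (p+1) = (A (1+p) * a (n+2) (1+p-1)) • v (1+p)
      rw [show (1+p-1:ℤ) = p by ring, show (1+p:ℤ) = p+1 by ring, mul_comm]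
    -- shift the third sum
    have shift3 : ∑ p ∈ Finset.Icc (1:ℤ) K, (a (n+2) p * A (1-p)) • v (p-1)
        = ∑ r ∈ Finset.Icc (1:ℤ) K, (A (-r) * a (n+2) (r+1)) • v r := by
      have s1 : ∑ p ∈ Finset.Icc (2:ℤ) K, (a (n+2) p * A (1-p)) • v (p-1)
          = ∑ p ∈ Finset.Icc (1:ℤ) K, (a (n+2) p * A (1-p)) • v (p-1) := by
        apply Finset.sum_subset (by apply Finset.Icc_subset_Icc_left; omega)
        intro x hx hnx
        simp only [Finset.mem_Icc] at hx hnx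
        have hx1 : x = 1 := by omega
        rw [hx1, show (1-1:ℤ) = 0 by ring, v_zero, smul_zero]
      have s2 : ∑ r ∈ Finset.Icc (1:ℤ) (K-1), (A (-r) * a (n+2) (r+1)) • v r
          = ∑ r ∈ Finset.Icc (1:ℤ) K, (A (-r) * a (n+2) (r+1)) • v r := by
        apply Finset.sum_subset (Finset.Icc_subset_Icc_right (by omega))
        intro x hx hnx
        simp only [Finset.mem_Icc] at hx hnx
        rw [a_gt (n+2) (x+1) (by push_cast; omega), mul_zero, zero_smul]
      rw [← s1, ← s2]
      have h := Finset.map_add_left_Icc (1:ℤ) (K-1) 1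
      rw [show (1+1:ℤ) = 2 by ring, show (1+(K-1):ℤ) = K by ring] at h
      rw [← h, Finset.sum_map]
      apply Finset.sum_congr rfl
      intro r _
      show (a (n+2) (1+r) * A (1-(1+r))) • v (1+r-1) = (A (-r) * a (n+2) (r+1)) • v r
      rw [show (1+r-1:ℤ) = r by ring, show (1-(1+r):ℤ) = -r by ring,
        show (1+r:ℤ) = r+1 by ring, mul_comm]
    rw [shift1, shift3, ← Finset.sum_add_distrib, ← Finset.sum_add_distrib,
      ← Finset.sum_sub_distrib]
    apply Finset.sum_congr rfl
    intro r _
    show (A r * a (n+2) (r-1)) • v r + ((A r - A (r+1)) * a (n+2) r) • v r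
        + (A (-r) * a (n+2) (r+1)) • v r - a (n+1) r • v r = a (n+2+1) r • v r
    have ha : a (n+2+1) r = A r * a (n+2) (r-1) + (A r - A (r+1)) * a (n+2) r
        + A (-r) * a (n+2) (r+1) - a (n+1) r := rfl
    rw [ha]
    simp only [Algebra.smul_def, map_add, map_sub, map_mul, map_one]
    ring

end main

theorem chebyshev_expansion_of_DAHA_action
    (Y Y' : Module.End F (LaurentPolynomial F))
    (hY : ∀ k : ℤ, Y (T k) = t1 • T (k - 1) - aop k • (T (k - 1) + T (-k)))
    (hY' : ∀ k : ℤ, Y' (T k) =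
      t1 • T (k + 1) - aop (-k) • (T (k + 1) + T (-k)) + (t1 - t1⁻¹) • T (-k))
    (n : ℕ) (hn : 1 ≤ n) :
    (Polynomial.aeval (Y + Y') (S (n - 1))) (T 1 - T (-1)) =
      ∑ p ∈ Finset.Icc (1 : ℤ) (n : ℤ), a n p • (T p - T (-p)) := by
  obtain ⟨m, rfl⟩ : ∃ m, n = m + 1 := ⟨n - 1, by omega⟩
  have h := key Y Y' hY hY' m
  rw [Nat.add_sub_cancel, h]
  have hc : ((m + 1 : ℕ) : ℤ) = (m : ℤ) + 1 := by push_cast; ring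
  rw [hc]
  rfl

end
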